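/- Let f(z) = z + a_2 z² + a_3 z³ + ⋯ be holomorphic on the unit disk D with f'(z) ≠ 0 on D and Re(1 + z f''(z)/f'(z)) ≥ 0 for all z ∈ D (f is convex). Then |a_3 - (2/3) a_2²| ≤ 1/3. -/

import Mathlib

set_option maxHeartbeats 1000000
open Complex Metric intervalIntegral

lemma coeff2_bound (g : ℂ → ℂ) (hg : DifferentiableOn ℂ g (ball (0:ℂ) 1))
    (hre : ∀ z ∈ ball (0:ℂ) 1, 0 ≤ (g z).re) (r : NNReal) (hr0 : 0 < (r:ℝ)) (hr1 : (r:ℝ) < 1) :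
    ‖iteratedDeriv 2 g 0‖ * (r:ℝ) ^ 2 ≤ 4 * (g 0).re := by
  have hsub : closedBall (0:ℂ) (r:ℝ) ⊆ ball (0:ℂ) 1 := by
    intro z hz
    simp only [mem_closedBall, mem_ball, dist_zero_right] at hz ⊢
    linarith
  have hd : DifferentiableOn ℂ g (closedBall (0:ℂ) (r:ℝ)) := hg.mono hsub
  have hgc : ContinuousOn g (closedBall (0:ℂ) (r:ℝ)) := hd.continuousOn
  set e : ℝ → ℂ := circleMap 0 (r:ℝ) with he_def
  have heC : ∀ θ, e θ ∈ closedBall (0:ℂ) (r:ℝ) := by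
    intro θ
    simp [he_def, mem_closedBall, dist_zero_right, norm_circleMap_zero,
      abs_of_pos hr0]
  have heB : ∀ θ, e θ ∈ ball (0:ℂ) 1 := fun θ => hsub (heC θ)
  have hene : ∀ θ, e θ ≠ 0 := fun θ => circleMap_ne_center hr0.ne'
  have hecont : Continuous e := continuous_circleMap 0 (r:ℝ)
  have hgecont : Continuous fun θ => g (e θ) := hgc.comp_continuous hecont heC
  have heinv : Continuous fun θ => (e θ)⁻¹ := hecont.inv₀ hene
  have habs : ∀ θ, ‖e θ‖ = r := by
    intro θ; simp [he_def, norm_circleMap_zero, abs_of_pos hr0]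
  have H : HasFPowerSeriesOnBall g (cauchyPowerSeries g 0 (r:ℝ)) 0 r :=
    DifferentiableOn.hasFPowerSeriesOnBall hd (by exact_mod_cast hr0)
  -- mean value
  have h1 : ∫ θ in (0:ℝ)..(2*Real.pi), g (e θ) = 2 * Real.pi * g 0 := by
    have h0 := H.coeff_zero (fun _ => 1)
    rw [show (fun _ : Fin 0 => (1:ℂ)) = (fun _ : Fin 0 => (1:ℂ)) from rfl,
      cauchyPowerSeries_apply g 0 (r:ℝ) 0 1] at h0
    simp only [circleIntegral, deriv_circleMap, smul_eq_mul, pow_zero, one_mul, sub_zero] at h0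
    simp only [← he_def] at h0
    have : ∫ θ in (0:ℝ)..(2*Real.pi), e θ * I * ((e θ)⁻¹ * g (e θ))
        = I * ∫ θ in (0:ℝ)..(2*Real.pi), g (e θ) := by
      rw [← integral_const_mul]
      refine intervalIntegral.integral_congr fun θ _ => ?_
      rw [show e θ * I * ((e θ)⁻¹ * g (e θ)) = (e θ * (e θ)⁻¹) * (I * g (e θ)) by ring,
        mul_inv_cancel₀ (hene θ), one_mul]
    rw [this] at h0
    have hne : (2 * (Real.pi:ℂ) * I) ≠ 0 := by
      simp [Real.pi_ne_zero, Complex.I_ne_zero, Complex.ofReal_ne_zero]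
    field_simp at h0
    linear_combination h0
  -- Cauchy vanishing integral
  have h2 : ∫ θ in (0:ℝ)..(2*Real.pi), (e θ)^2 * g (e θ) = 0 := by
    have hz : (∮ z in C(0, (r:ℝ)), z * g z) = 0 := by
      refine Complex.circleIntegral_eq_zero_of_differentiable_on_off_countable
        (NNReal.coe_nonneg r) Set.countable_empty (continuousOn_id.mul hgc) ?_
      intro z hzz
      exact differentiableAt_id.mul
        (hg.differentiableAt (isOpen_ball.mem_nhds (ball_subset_ball hr1.le hzz.1)))
    simp only [circleIntegral, deriv_circleMap, smul_eq_mul] at hz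
    simp only [← he_def] at hz
    have : ∫ θ in (0:ℝ)..(2*Real.pi), e θ * I * (e θ * g (e θ))
        = I * ∫ θ in (0:ℝ)..(2*Real.pi), (e θ)^2 * g (e θ) := by
      rw [← integral_const_mul]
      exact intervalIntegral.integral_congr fun θ _ => by ring
    rw [this] at hz
    exact (mul_eq_zero.mp hz).resolve_left Complex.I_ne_zero
  have hconj : ∀ θ, (starRingEnd ℂ) (e θ) = (r:ℂ)^2 * (e θ)⁻¹ := by
    intro θ
    have h2' : (e θ) * (starRingEnd ℂ) (e θ) = ((r:ℂ))^2 := by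
      rw [Complex.mul_conj, Complex.normSq_eq_norm_sq, habs]
      push_cast
      ring
    rw [← h2', mul_comm (e θ) ((starRingEnd ℂ) (e θ)), mul_assoc,
      mul_inv_cancel₀ (hene θ), mul_one]
  -- conjugate integral vanishes
  have h3 : ∫ θ in (0:ℝ)..(2*Real.pi), (e θ)⁻¹^2 * (starRingEnd ℂ) (g (e θ)) = 0 := by
    have hint2 : IntervalIntegrable (fun θ => (e θ)^2 * g (e θ))
        MeasureTheory.volume 0 (2*Real.pi) :=
      ((hecont.pow 2).mul hgecont).intervalIntegrable _ _
    have hc : ∫ θ in (0:ℝ)..(2*Real.pi), (starRingEnd ℂ) ((e θ)^2 * g (e θ)) = 0 := by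
      have := Complex.conjCLE.toContinuousLinearMap.intervalIntegral_comp_comm hint2
      simp only [ContinuousLinearEquiv.coe_coe, Complex.conjCLE_apply] at this
      rw [this, h2, map_zero]
    have hcong : ∀ θ, (starRingEnd ℂ) ((e θ)^2 * g (e θ))
        = (r:ℂ)^4 * ((e θ)⁻¹^2 * (starRingEnd ℂ) (g (e θ))) := by
      intro θ
      rw [map_mul, map_pow, hconj θ]
      ring
    rw [intervalIntegral.integral_congr (fun θ _ => hcong θ), integral_const_mul] at hc
    have hr4 : ((r:ℂ))^4 ≠ 0 := pow_ne_zero 4 (Complex.ofReal_ne_zero.mpr hr0.ne')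
    exact (mul_eq_zero.mp hc).resolve_left hr4
  -- the key integral A
  set A : ℂ := ∫ θ in (0:ℝ)..(2*Real.pi), (e θ)⁻¹^2 * g (e θ) with hA_def
  have hgeconj : Continuous fun θ => (starRingEnd ℂ) (g (e θ)) :=
    Complex.continuous_conj.comp hgecont
  have hi1 : IntervalIntegrable (fun θ => (e θ)⁻¹^2 * g (e θ))
      MeasureTheory.volume 0 (2*Real.pi) := ((heinv.pow 2).mul hgecont).intervalIntegrable _ _
  have hi2 : IntervalIntegrable (fun θ => (e θ)⁻¹^2 * (starRingEnd ℂ) (g (e θ)))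
      MeasureTheory.volume 0 (2*Real.pi) := ((heinv.pow 2).mul hgeconj).intervalIntegrable _ _
  have hA2 : A = ∫ θ in (0:ℝ)..(2*Real.pi), (e θ)⁻¹^2 * ((2*(g (e θ)).re : ℝ) : ℂ) := by
    calc A = (∫ θ in (0:ℝ)..(2*Real.pi), (e θ)⁻¹^2 * g (e θ))
        + ∫ θ in (0:ℝ)..(2*Real.pi), (e θ)⁻¹^2 * (starRingEnd ℂ) (g (e θ)) := by
          rw [h3, add_zero, hA_def]
      _ = ∫ θ in (0:ℝ)..(2*Real.pi),
          ((e θ)⁻¹^2 * g (e θ) + (e θ)⁻¹^2 * (starRingEnd ℂ) (g (e θ))) :=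
          (intervalIntegral.integral_add hi1 hi2).symm
      _ = _ := intervalIntegral.integral_congr fun θ _ => by
          rw [← mul_add, Complex.add_conj]
  -- real part integral
  have hre_int : ∫ θ in (0:ℝ)..(2*Real.pi), (g (e θ)).re = 2*Real.pi*(g 0).re := by
    have hcc := Complex.reCLM.intervalIntegral_comp_comm (hgecont.intervalIntegrable (μ := MeasureTheory.volume) 0 (2*Real.pi))
    simp only [Complex.reCLM_apply] at hcc
    rw [hcc, h1]
    simp [Complex.mul_re]
  -- bound on A
  have hre_nonneg : ∀ θ, 0 ≤ (g (e θ)).re := fun θ => hre _ (heB θ)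
  have hbA : ‖A‖ ≤ (r:ℝ)⁻¹^2 * (4*Real.pi*(g 0).re) := by
    rw [hA2]
    refine le_trans (intervalIntegral.norm_integral_le_integral_norm Real.two_pi_pos.le) ?_
    have : ∀ θ, ‖(e θ)⁻¹^2 * ((2*(g (e θ)).re : ℝ) : ℂ)‖
        = (r:ℝ)⁻¹^2 * (2*(g (e θ)).re) := by
      intro θ
      rw [norm_mul, norm_pow, norm_inv, Complex.norm_real, Real.norm_eq_abs,
        _root_.abs_of_nonneg (by linarith [hre_nonneg θ]), habs]
    rw [intervalIntegral.integral_congr fun θ _ => this θ, integral_const_mul,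
      integral_const_mul, hre_int]
    ring_nf
    nlinarith [Real.pi_pos, hre_nonneg 0, hre 0 (by simp), sq_nonneg ((r:ℝ)⁻¹)]
  -- coefficient formula
  have hP2 := H.factorial_smul (1:ℂ) 2
  have hiter : iteratedDeriv 2 g 0 = 2 * ((cauchyPowerSeries g 0 (r:ℝ)) 2 fun _ => (1:ℂ)) := by
    rw [iteratedDeriv_eq_iteratedFDeriv, ← hP2]
    simp [Nat.factorial, nsmul_eq_mul]
  have hP2val : ((cauchyPowerSeries g 0 (r:ℝ)) 2 fun _ => (1:ℂ))
      = (2*(Real.pi:ℂ)*I)⁻¹ * (I * A) := by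
    rw [cauchyPowerSeries_apply g 0 (r:ℝ) 2 1]
    simp only [circleIntegral, deriv_circleMap, smul_eq_mul, sub_zero]
    simp only [← he_def]
    congr 1
    rw [hA_def, ← integral_const_mul]
    refine intervalIntegral.integral_congr fun θ _ => ?_
    calc e θ * I * ((1 / e θ) ^ 2 * ((e θ)⁻¹ * g (e θ)))
        = (e θ * (e θ)⁻¹) * (I * ((e θ)⁻¹ ^ 2 * g (e θ))) := by ring
      _ = I * ((e θ)⁻¹ ^ 2 * g (e θ)) := by rw [mul_inv_cancel₀ (hene θ), one_mul]
  have habsD : ‖iteratedDeriv 2 g 0‖ = Real.pi⁻¹ * ‖A‖ := by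
    rw [hiter, hP2val]
    simp only [norm_mul, norm_inv, Complex.norm_I, Complex.norm_real, Real.norm_eq_abs, Complex.norm_two,
      abs_of_pos Real.pi_pos]
    field_simp
  rw [habsD]
  have hrne : (r:ℝ) ≠ 0 := hr0.ne'
  have hπ : (0:ℝ) < Real.pi := Real.pi_pos
  calc Real.pi⁻¹ * ‖A‖ * (r:ℝ)^2
      ≤ Real.pi⁻¹ * ((r:ℝ)⁻¹^2 * (4*Real.pi*(g 0).re)) * (r:ℝ)^2 := by
        have hπi : (0:ℝ) ≤ Real.pi⁻¹ := by positivity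
        exact mul_le_mul_of_nonneg_right (mul_le_mul_of_nonneg_left hbA hπi) (sq_nonneg _)
    _ = 4 * (g 0).re := by field_simp

lemma caratheodory_second (g : ℂ → ℂ) (hg : DifferentiableOn ℂ g (ball (0:ℂ) 1))
    (hre : ∀ z ∈ ball (0:ℂ) 1, 0 ≤ (g z).re) :
    ‖iteratedDeriv 2 g 0‖ ≤ 4 * (g 0).re := by
  have key : ∀ r : ℝ, 0 < r → r < 1 →
      ‖iteratedDeriv 2 g 0‖ * r^2 ≤ 4 * (g 0).re := by
    intro r h0 h1
    have hc : (r.toNNReal : ℝ) = r := Real.coe_toNNReal r h0.le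
    have := coeff2_bound g hg hre r.toNNReal (by rw [hc]; exact h0) (by rw [hc]; exact h1)
    rwa [hc] at this
  have hlim : Filter.Tendsto (fun r:ℝ => ‖iteratedDeriv 2 g 0‖ * r^2)
      (nhdsWithin 1 (Set.Iio 1)) (nhds (‖iteratedDeriv 2 g 0‖ * 1^2)) :=
    ((continuous_const.mul (continuous_pow 2)).tendsto 1).mono_left nhdsWithin_le_nhds
  have hle : ‖iteratedDeriv 2 g 0‖ * 1^2 ≤ 4 * (g 0).re := by
    refine le_of_tendsto hlim ?_
    filter_upwards [self_mem_nhdsWithin,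
      eventually_nhdsWithin_of_eventually_nhds (eventually_gt_nhds zero_lt_one)] with r hr1 hr0
    exact key r hr0 hr1
  simpa using hle

theorem stmt_7 (f : ℂ → ℂ) (hf : DifferentiableOn ℂ f (ball (0:ℂ) 1))
    (h0 : f 0 = 0) (h1 : deriv f 0 = 1)
    (hf' : ∀ z ∈ ball (0:ℂ) 1, deriv f z ≠ 0)
    (a : ℕ → ℂ) (ha : ∀ n, a n = iteratedDeriv n f 0 / (Nat.factorial n))
    (hconv : ∀ z ∈ ball (0:ℂ) 1,
      0 ≤ (1 + z * iteratedDeriv 2 f z / deriv f z).re) :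
    ‖a 3 - (2/3 : ℂ) * a 2 ^ 2‖ ≤ 1/3 := by
  have hSopen : IsOpen (ball (0:ℂ) 1) := isOpen_ball
  have h0S : (0:ℂ) ∈ ball (0:ℂ) 1 := mem_ball_self one_pos
  have hfa : AnalyticOnNhd ℂ f (ball (0:ℂ) 1) := hf.analyticOnNhd hSopen
  set F1 : ℂ → ℂ := deriv f with hF1_def
  set F2 : ℂ → ℂ := deriv F1 with hF2_def
  set F3 : ℂ → ℂ := deriv F2 with hF3_def
  have hF1a : AnalyticOnNhd ℂ F1 (ball (0:ℂ) 1) := hfa.deriv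
  have hF2a : AnalyticOnNhd ℂ F2 (ball (0:ℂ) 1) := hF1a.deriv
  have hF3a : AnalyticOnNhd ℂ F3 (ball (0:ℂ) 1) := hF2a.deriv
  have hi2 : iteratedDeriv 2 f = F2 := by
    rw [show (2:ℕ) = 1 + 1 from rfl, iteratedDeriv_succ, iteratedDeriv_one]
  have hi3 : iteratedDeriv 3 f 0 = F3 0 := by
    rw [show (3:ℕ) = 2 + 1 from rfl, iteratedDeriv_succ, hi2]
  set g : ℂ → ℂ := fun z => 1 + z * F2 z / F1 z with hg_def
  have hgd : DifferentiableOn ℂ g (ball (0:ℂ) 1) := by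
    intro z hz
    exact (((differentiableAt_id.mul (hF2a z hz).differentiableAt).div
      (hF1a z hz).differentiableAt (hf' z hz)).const_add 1).differentiableWithinAt
  have hgre : ∀ z ∈ ball (0:ℂ) 1, 0 ≤ (g z).re := by
    intro z hz
    have := hconv z hz
    rwa [hi2] at this
  have hg0 : g 0 = 1 := by simp [hg_def]
  have hcore := caratheodory_second g hgd hgre
  rw [hg0] at hcore
  norm_num at hcore
  -- compute iteratedDeriv 2 g 0
  set u : ℂ → ℂ := fun z => F2 z / F1 z with hu_def
  set v : ℂ → ℂ := fun z => (F3 z * F1 z - F2 z * F2 z) / (F1 z)^2 with hv_def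
  have hu : ∀ z ∈ ball (0:ℂ) 1, HasDerivAt u (v z) z := by
    intro z hz
    exact (hF2a z hz).differentiableAt.hasDerivAt.div
      (hF1a z hz).differentiableAt.hasDerivAt (hf' z hz)
  set G1 : ℂ → ℂ := fun z => u z + z * v z with hG1_def
  have hg' : ∀ z ∈ ball (0:ℂ) 1, HasDerivAt g (G1 z) z := by
    intro z hz
    have h := ((hasDerivAt_id z).mul (hu z hz)).const_add (1:ℂ)
    have hgu : g = fun w => 1 + w * u w := by
      funext w; simp only [hg_def, hu_def, mul_div_assoc]
    rw [hgu]
    simpa [hG1_def] using h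
  have hvd : DifferentiableAt ℂ v 0 := by
    refine (((hF3a 0 h0S).differentiableAt.mul (hF1a 0 h0S).differentiableAt).sub
      ((hF2a 0 h0S).differentiableAt.mul (hF2a 0 h0S).differentiableAt)).div
      ((hF1a 0 h0S).differentiableAt.pow 2) ?_
    rw [h1]; norm_num
  have hG1' : HasDerivAt G1 (v 0 + (1 * v 0 + 0 * deriv v 0)) 0 :=
    (hu 0 h0S).add ((hasDerivAt_id 0).mul hvd.hasDerivAt)
  have hg2 : iteratedDeriv 2 g 0 = v 0 + (1 * v 0 + 0 * deriv v 0) := by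
    rw [show (2:ℕ) = 1 + 1 from rfl, iteratedDeriv_succ, iteratedDeriv_one]
    have heq : deriv g =ᶠ[nhds (0:ℂ)] G1 :=
      Filter.eventuallyEq_of_mem (hSopen.mem_nhds h0S) fun z hz => (hg' z hz).deriv
    rw [heq.deriv_eq]
    exact hG1'.deriv
  have hF10 : F1 0 = 1 := h1
  have hv0 : v 0 = F3 0 - F2 0 * F2 0 := by
    simp [hv_def, hF10]
  have hg2v : iteratedDeriv 2 g 0 = 2 * (F3 0 - F2 0 * F2 0) := by
    rw [hg2, hv0]; ring
  rw [hg2v] at hcore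
  -- final computation
  have hval : a 3 - (2/3 : ℂ) * a 2 ^ 2 = (2 * (F3 0 - F2 0 * F2 0)) / 12 := by
    rw [ha 3, ha 2, hi3, show iteratedDeriv 2 f 0 = F2 0 from by rw [hi2]]
    norm_num [Nat.factorial]
    ring
  rw [hval, norm_div]
  have h12 : ‖(12:ℂ)‖ = 12 := by norm_num
  rw [h12]
  rw [div_le_div_iff₀ (by norm_num) (by norm_num)]
  linarith
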